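/- arXiv:1310.1110 — 3 statements merged into one kernel-verified Lean document; each statement's English description precedes it below -/
import Mathlib

section
/- Let ρ_AB, ρ_BC, ρ_AC be compatible with a tripartite state ρ_ABC, and suppose ρ_AB has the form ρ_AB = Σ_i p_i |a_i⟩⟨a_i| ⊗ ρ_i for an orthonormal basis {|a_i⟩} of H_A and states ρ_i on H_B (with p_i ≥ 0, Σ p_i = 1). Then the triple is also compatible with the state σ_ABC = Σ_i (|a_i⟩⟨a_i| ⊗ I_{BC}) ρ_ABC (|a_i⟩⟨a_i| ⊗ I_{BC}), which is separable across the cut A:BC (hence biseparable). -/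
open Matrix BigOperators
open scoped Kronecker ComplexOrder

namespace QMarginal

abbrev Mat (n : ℕ) := Matrix (Fin n) (Fin n) ℂ
abbrev Bip (m n : ℕ) := Matrix (Fin m × Fin n) (Fin m × Fin n) ℂ
abbrev Tri (dA dB dC : ℕ) := Matrix (Fin dA × Fin dB × Fin dC) (Fin dA × Fin dB × Fin dC) ℂ

/-- partial trace over the third system -/
noncomputable def trC {dA dB dC : ℕ} (ρ : Tri dA dB dC) : Bip dA dB :=
  fun x y => ∑ c : Fin dC, ρ (x.1, x.2, c) (y.1, y.2, c)

/-- partial trace over the second system -/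
noncomputable def trB {dA dB dC : ℕ} (ρ : Tri dA dB dC) : Bip dA dC :=
  fun x y => ∑ b : Fin dB, ρ (x.1, b, x.2) (y.1, b, y.2)

/-- partial trace over the first system -/
noncomputable def trA {dA dB dC : ℕ} (ρ : Tri dA dB dC) : Bip dB dC :=
  fun x y => ∑ a : Fin dA, ρ (a, x.1, x.2) (a, y.1, y.2)

/-- partial trace of a bipartite matrix over the right factor -/
noncomputable def trR {m n : ℕ} (ρ : Bip m n) : Mat m :=
  fun i j => ∑ b : Fin n, ρ (i, b) (j, b)

/-- partial trace of a bipartite matrix over the left factor -/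
noncomputable def trL {m n : ℕ} (ρ : Bip m n) : Mat n :=
  fun i j => ∑ a : Fin m, ρ (a, i) (a, j)

def IsDensity {ι : Type*} [Fintype ι] [DecidableEq ι] (ρ : Matrix ι ι ℂ) : Prop :=
  ρ.PosSemidef ∧ ρ.trace = 1

/-- rank-one projector onto a vector -/
def projV {ι : Type*} (v : ι → ℂ) : Matrix ι ι ℂ := fun i j => v i * star (v j)

def prod2 {m n : ℕ} (v : Fin m → ℂ) (w : Fin n → ℂ) : Fin m × Fin n → ℂ :=
  fun x => v x.1 * w x.2

def prod3 {dA dB dC : ℕ} (u : Fin dA → ℂ) (v : Fin dB → ℂ) (w : Fin dC → ℂ) :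
    Fin dA × Fin dB × Fin dC → ℂ :=
  fun x => u x.1 * v x.2.1 * w x.2.2

/-- a family of vectors forming an orthonormal basis -/
def ONB {n : ℕ} (a : Fin n → Fin n → ℂ) : Prop :=
  ∀ i j, (∑ k, star (a i k) * a j k) = if i = j then (1:ℂ) else 0

/-- fully classical bipartite state -/
def FullyClassical {m n : ℕ} (ρ : Bip m n) : Prop :=
  ∃ (a : Fin m → Fin m → ℂ) (b : Fin n → Fin n → ℂ) (p : Fin m → Fin n → ℝ),
    ONB a ∧ ONB b ∧ (∀ i j, 0 ≤ p i j) ∧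
    ρ = ∑ i, ∑ j, (p i j) • projV (prod2 (a i) (b j))

/-- fully classical tripartite state -/
def FullyClassicalTri {dA dB dC : ℕ} (ρ : Tri dA dB dC) : Prop :=
  ∃ (a : Fin dA → Fin dA → ℂ) (b : Fin dB → Fin dB → ℂ) (c : Fin dC → Fin dC → ℂ)
    (f : Fin dA → Fin dB → Fin dC → ℝ),
    ONB a ∧ ONB b ∧ ONB c ∧ (∀ i j k, 0 ≤ f i j k) ∧
    ρ = ∑ i, ∑ j, ∑ k, (f i j k) • projV (prod3 (a i) (b j) (c k))

/-- fully separable tripartite state -/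
def FullySepTri {dA dB dC : ℕ} (ρ : Tri dA dB dC) : Prop :=
  ∃ (N : ℕ) (p : Fin N → ℝ) (u : Fin N → Fin dA → ℂ) (v : Fin N → Fin dB → ℂ)
    (w : Fin N → Fin dC → ℂ),
    (∀ i, 0 ≤ p i) ∧ ρ = ∑ i, (p i) • projV (prod3 (u i) (v i) (w i))

/-- M ⊗ I_C on the tripartite space, M acting on A ⊗ B -/
def embAB {dA dB : ℕ} (M : Bip dA dB) (dC : ℕ) : Tri dA dB dC :=
  fun x y => M (x.1, x.2.1) (y.1, y.2.1) * (if x.2.2 = y.2.2 then 1 else 0)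

/-- M ⊗ I_B on the tripartite space, M acting on A ⊗ C -/
def embAC {dA dC : ℕ} (M : Bip dA dC) (dB : ℕ) : Tri dA dB dC :=
  fun x y => M (x.1, x.2.2) (y.1, y.2.2) * (if x.2.1 = y.2.1 then 1 else 0)

/-- M ⊗ I_A on the tripartite space, M acting on B ⊗ C -/
def embBC {dB dC : ℕ} (M : Bip dB dC) (dA : ℕ) : Tri dA dB dC :=
  fun x y => M (x.2.1, x.2.2) (y.2.1, y.2.2) * (if x.1 = y.1 then 1 else 0)

/-- M ⊗ I_BC on the tripartite space, M acting on A -/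
def embA {dA dB dC : ℕ} (M : Mat dA) : Tri dA dB dC :=
  fun x y => M x.1 y.1 * (if x.2 = y.2 then 1 else 0)

/-- separability across the cut A : BC -/
def SepA_BC {dA dB dC : ℕ} (σ : Tri dA dB dC) : Prop :=
  ∃ (N : ℕ) (p : Fin N → ℝ) (a : Fin N → Fin dA → ℂ)
    (ψ : Fin N → (Fin dB × Fin dC → ℂ)),
    (∀ i, 0 ≤ p i) ∧
    σ = ∑ i, (p i) • projV (fun z : Fin dA × Fin dB × Fin dC => a i z.1 * ψ i z.2)


lemma pinch_apply {dA dB dC : ℕ} (ρ : Tri dA dB dC) (v : Fin dA → ℂ)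
    (x y : Fin dA × Fin dB × Fin dC) :
    (embA (projV v) * ρ * embA (projV v) : Tri dA dB dC) x y
      = v x.1 * star (v y.1) * ∑ s, ∑ t, star (v s) * v t * ρ (s, x.2) (t, y.2) := by
  simp only [Matrix.mul_apply, embA, projV, Fintype.sum_prod_type, mul_ite, ite_mul,
    mul_one, mul_zero, zero_mul, one_mul, Finset.sum_ite_eq, Finset.sum_ite_eq',
    Finset.mem_univ, if_true]
  simp only [Finset.mul_sum, Finset.sum_mul]
  rw [Finset.sum_comm]
  exact Finset.sum_congr rfl fun s _ => Finset.sum_congr rfl fun t _ => by ring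

lemma onb_conj {n : ℕ} {a : Fin n → Fin n → ℂ} (ha : ONB a) (i j : Fin n) :
    (∑ t, a i t * star (a j t)) = if i = j then 1 else 0 := by
  have h := ha i j
  calc (∑ t, a i t * star (a j t)) = star (∑ t, star (a i t) * a j t) := by
        rw [star_sum]; exact Finset.sum_congr rfl fun t _ => by
          simp [star_mul', star_star, mul_comm]
    _ = if i = j then 1 else 0 := by rw [h]; split <;> simp

lemma onb_complete {n : ℕ} {a : Fin n → Fin n → ℂ} (ha : ONB a) (s t : Fin n) :
    (∑ i, star (a i s) * a i t) = if s = t then 1 else 0 := by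
  classical
  set U : Mat n := Matrix.of a with hU
  have h1 : U * Uᴴ = 1 := by
    ext i j
    rw [Matrix.mul_apply]
    simp only [Matrix.conjTranspose_apply, hU, Matrix.of_apply]
    rw [show (∑ k, a i k * star (a j k)) = if i = j then 1 else 0 from onb_conj ha i j]
    simp [Matrix.one_apply]
  have h2 : Uᴴ * U = 1 := mul_eq_one_comm.mp h1
  have := congrFun (congrFun h2 s) t
  rw [Matrix.mul_apply] at this
  simp only [Matrix.conjTranspose_apply, hU, Matrix.of_apply] at this
  rw [this]
  simp [Matrix.one_apply]

lemma collapse {n : ℕ} {a : Fin n → Fin n → ℂ} (ha : ONB a) (i : Fin n) (g : Fin n → ℂ) :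
    (∑ s, ∑ t, star (a i s) * a i t * (∑ j, g j * (a j s * star (a j t)))) = g i := by
  have h2 : ∀ j : Fin n, (∑ t, a i t * star (a j t)) = if i = j then 1 else 0 := fun j => onb_conj ha i j
  calc (∑ s, ∑ t, star (a i s) * a i t * (∑ j, g j * (a j s * star (a j t))))
      = ∑ s, star (a i s) * a i s * g i := by
        refine Finset.sum_congr rfl fun s _ => ?_
        have e1 : ∀ t, star (a i s) * a i t * (∑ j, g j * (a j s * star (a j t)))
            = ∑ j, (g j * a j s) * (star (a i s) * (a i t * star (a j t))) := fun t => by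
          rw [Finset.mul_sum]; exact Finset.sum_congr rfl fun j _ => by ring
        simp_rw [e1]
        rw [Finset.sum_comm]
        have e2 : ∀ j : Fin n, (∑ t, (g j * a j s) * (star (a i s) * (a i t * star (a j t))))
            = (g j * a j s * star (a i s)) * (if i = j then 1 else 0) := fun j => by
          rw [← h2 j, Finset.mul_sum]
          exact Finset.sum_congr rfl fun t _ => by ring
        simp_rw [e2]
        simp only [mul_ite, mul_one, mul_zero, Finset.sum_ite_eq, Finset.mem_univ, if_true]
        ring
    _ = g i := by
        rw [← Finset.sum_mul, ha i i]
        simp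

lemma posSemidef_sum {m : Type*} [Fintype m] {ι : Type*} (s : Finset ι)
    (f : ι → Matrix m m ℂ) (h : ∀ i ∈ s, (f i).PosSemidef) : (∑ i ∈ s, f i).PosSemidef := by
  classical
  induction s using Finset.induction with
  | empty => simpa using Matrix.PosSemidef.zero
  | @insert j s hni ih =>
      rw [Finset.sum_insert hni]
      exact (h _ (Finset.mem_insert_self _ _)).add (ih fun i hi => h i (Finset.mem_insert_of_mem hi))

lemma embA_projV_herm {dA dB dC : ℕ} (v : Fin dA → ℂ) :
    (embA (projV v) : Tri dA dB dC)ᴴ = embA (projV v) := by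
  ext x y
  by_cases h : x.2 = y.2
  · simp [Matrix.conjTranspose_apply, embA, projV, h, star_mul', star_star, mul_comm]
  · have h' : ¬ y.2 = x.2 := fun e => h e.symm
    simp [Matrix.conjTranspose_apply, embA, projV, h, h']

lemma trace_trA {dA dB dC : ℕ} (ρ : Tri dA dB dC) : (trA ρ).trace = ρ.trace := by
  calc (trA ρ).trace = ∑ x : Fin dB × Fin dC, ∑ u, ρ (u, x.1, x.2) (u, x.1, x.2) := rfl
    _ = ∑ u, ∑ x : Fin dB × Fin dC, ρ (u, x.1, x.2) (u, x.1, x.2) := Finset.sum_comm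
    _ = ρ.trace := by simp [Matrix.trace, Matrix.diag, Fintype.sum_prod_type]
open scoped MatrixOrder Matrix.Norms.L2Operator in
lemma psd_factor {n : Type*} [Fintype n] [DecidableEq n] {A : Matrix n n ℂ}
    (hA : A.PosSemidef) : ∃ B : Matrix n n ℂ, A = Bᴴ * B := by
  obtain ⟨B, hB⟩ := CStarAlgebra.nonneg_iff_eq_star_mul_self.mp hA.nonneg
  exact ⟨B, by rw [hB, Matrix.star_eq_conjTranspose]⟩

/-- if ρ_AB (and ρ_AC) are classical-quantum in the basis {|a_i⟩},
the pinching of the global state on A gives a biseparable state with the same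
two-body reductions. -/
theorem stmt_16 {dA dB dC : ℕ} (ρABC : Tri dA dB dC) (hρ : IsDensity ρABC)
    (a : Fin dA → Fin dA → ℂ) (ha : ONB a)
    (p : Fin dA → ℝ) (hp : ∀ i, 0 ≤ p i) (hp1 : ∑ i, p i = 1)
    (ρi : Fin dA → Mat dB) (hρi : ∀ i, IsDensity (ρi i))
    (hAB : trC ρABC = ∑ i, (p i) • (projV (a i) ⊗ₖ ρi i))
    (q : Fin dA → ℝ) (hq : ∀ i, 0 ≤ q i)
    (σi : Fin dA → Mat dC) (hσi : ∀ i, IsDensity (σi i))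
    (hAC : trB ρABC = ∑ i, (q i) • (projV (a i) ⊗ₖ σi i))
    (σABC : Tri dA dB dC)
    (hσ : σABC = ∑ i, embA (projV (a i)) * ρABC * embA (projV (a i))) :
    IsDensity σABC ∧ SepA_BC σABC ∧
    trC σABC = trC ρABC ∧ trB σABC = trB ρABC ∧ trA σABC = trA ρABC := by
  classical
  have hσ' : ∀ x y, σABC x y
      = ∑ i, a i x.1 * star (a i y.1)
          * ∑ s, ∑ t, star (a i s) * a i t * ρABC (s, x.2) (t, y.2) := by
    intro x y
    rw [hσ, Matrix.sum_apply]
    exact Finset.sum_congr rfl fun i _ => pinch_apply ρABC (a i) x y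
  -- trA
  have htrA : trA σABC = trA ρABC := by
    ext x y
    calc trA σABC x y
        = ∑ u, ∑ i, a i u * star (a i u)
            * ∑ s, ∑ t, star (a i s) * a i t * ρABC (s, x.1, x.2) (t, y.1, y.2) := by
          exact Finset.sum_congr rfl fun u _ => hσ' (u, x.1, x.2) (u, y.1, y.2)
      _ = ∑ i, (∑ u, a i u * star (a i u))
            * ∑ s, ∑ t, star (a i s) * a i t * ρABC (s, x.1, x.2) (t, y.1, y.2) := by
          rw [Finset.sum_comm]
          exact Finset.sum_congr rfl fun i _ => by rw [Finset.sum_mul]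
      _ = ∑ i, ∑ s, ∑ t, star (a i s) * a i t * ρABC (s, x.1, x.2) (t, y.1, y.2) := by
          refine Finset.sum_congr rfl fun i _ => ?_
          rw [onb_conj ha i i]
          simp
      _ = ∑ s, ∑ t, (∑ i, star (a i s) * a i t) * ρABC (s, x.1, x.2) (t, y.1, y.2) := by
          rw [Finset.sum_comm]
          refine Finset.sum_congr rfl fun s _ => ?_
          rw [Finset.sum_comm]
          exact Finset.sum_congr rfl fun t _ => by rw [Finset.sum_mul]
      _ = trA ρABC x y := by
          simp_rw [fun s t => onb_complete ha s t]
          simp only [ite_mul, one_mul, zero_mul, Finset.sum_ite_eq, Finset.mem_univ, if_true]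
          rfl
  -- density
  have hdens : IsDensity σABC := by
    constructor
    · rw [hσ]
      refine posSemidef_sum _ _ fun i _ => ?_
      have h := (hρ.1).mul_mul_conjTranspose_same (embA (projV (a i)) : Tri dA dB dC)
      rwa [embA_projV_herm] at h
    · calc σABC.trace = (trA σABC).trace := (trace_trA σABC).symm
        _ = (trA ρABC).trace := by rw [htrA]
        _ = ρABC.trace := trace_trA ρABC
        _ = 1 := hρ.2
  -- trC
  have htrC : trC σABC = trC ρABC := by
    ext x y
    have hentry : ∀ (s t : Fin dA) (b b' : Fin dB), trC ρABC (s, b) (t, b')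
        = ∑ j, ((p j : ℂ) * ρi j b b') * (a j s * star (a j t)) := by
      intro s t b b'
      rw [hAB, Matrix.sum_apply]
      exact Finset.sum_congr rfl fun j _ => by
        simp [Matrix.smul_apply, Matrix.kroneckerMap_apply, projV, Complex.real_smul]
        ring
    calc trC σABC x y
        = ∑ i, a i x.1 * star (a i y.1)
            * ∑ s, ∑ t, star (a i s) * a i t * trC ρABC (s, x.2) (t, y.2) := by
          show (∑ c, σABC (x.1, x.2, c) (y.1, y.2, c)) = _
          simp_rw [fun c => hσ' (x.1, x.2, c) (y.1, y.2, c)]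
          rw [Finset.sum_comm]
          refine Finset.sum_congr rfl fun i _ => ?_
          rw [← Finset.mul_sum]
          congr 1
          rw [Finset.sum_comm]
          refine Finset.sum_congr rfl fun s _ => ?_
          rw [Finset.sum_comm]
          refine Finset.sum_congr rfl fun t _ => ?_
          rw [← Finset.mul_sum]
          rfl
      _ = ∑ i, a i x.1 * star (a i y.1) * ((p i : ℂ) * ρi i x.2 y.2) := by
          refine Finset.sum_congr rfl fun i _ => ?_
          congr 1
          simp_rw [fun s t => hentry s t x.2 y.2]
          exact collapse ha i _
      _ = trC ρABC x y := by
          rw [hAB, Matrix.sum_apply]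
          exact Finset.sum_congr rfl fun i _ => by
            simp [Matrix.smul_apply, Matrix.kroneckerMap_apply, projV, Complex.real_smul]
            ring
  -- trB
  have htrB : trB σABC = trB ρABC := by
    ext x y
    have hentry : ∀ (s t : Fin dA) (c c' : Fin dC), trB ρABC (s, c) (t, c')
        = ∑ j, ((q j : ℂ) * σi j c c') * (a j s * star (a j t)) := by
      intro s t c c'
      rw [hAC, Matrix.sum_apply]
      exact Finset.sum_congr rfl fun j _ => by
        simp [Matrix.smul_apply, Matrix.kroneckerMap_apply, projV, Complex.real_smul]
        ring
    calc trB σABC x y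
        = ∑ i, a i x.1 * star (a i y.1)
            * ∑ s, ∑ t, star (a i s) * a i t * trB ρABC (s, x.2) (t, y.2) := by
          show (∑ b, σABC (x.1, b, x.2) (y.1, b, y.2)) = _
          simp_rw [fun b => hσ' (x.1, b, x.2) (y.1, b, y.2)]
          rw [Finset.sum_comm]
          refine Finset.sum_congr rfl fun i _ => ?_
          rw [← Finset.mul_sum]
          congr 1
          rw [Finset.sum_comm]
          refine Finset.sum_congr rfl fun s _ => ?_
          rw [Finset.sum_comm]
          refine Finset.sum_congr rfl fun t _ => ?_
          rw [← Finset.mul_sum]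
          rfl
      _ = ∑ i, a i x.1 * star (a i y.1) * ((q i : ℂ) * σi i x.2 y.2) := by
          refine Finset.sum_congr rfl fun i _ => ?_
          congr 1
          simp_rw [fun s t => hentry s t x.2 y.2]
          exact collapse ha i _
      _ = trB ρABC x y := by
          rw [hAC, Matrix.sum_apply]
          exact Finset.sum_congr rfl fun i _ => by
            simp [Matrix.smul_apply, Matrix.kroneckerMap_apply, projV, Complex.real_smul]
            ring
  -- separability
  have hsep : SepA_BC σABC := by
    have hMps : ∀ i : Fin dA, Matrix.PosSemidef (Matrix.of fun (x y : Fin dB × Fin dC) =>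
        ∑ s, ∑ t, star (a i s) * a i t * ρABC (s, x) (t, y)) := by
      intro i
      set V : Matrix (Fin dA × Fin dB × Fin dC) (Fin dB × Fin dC) ℂ :=
        fun u w => a i u.1 * (if u.2 = w then 1 else 0) with hV
      have h := (hρ.1).conjTranspose_mul_mul_same V
      have hstep1 : ∀ (x : Fin dB × Fin dC) (w : Fin dA × Fin dB × Fin dC),
          (Vᴴ * ρABC : Matrix (Fin dB × Fin dC) (Fin dA × Fin dB × Fin dC) ℂ) x w
            = ∑ s, star (a i s) * ρABC (s, x) w := by
        intro x w
        rw [Matrix.mul_apply, Fintype.sum_prod_type]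
        refine Finset.sum_congr rfl fun s _ => ?_
        simp only [Matrix.conjTranspose_apply]
        simp [hV, Matrix.conjTranspose_apply, star_mul', apply_ite (star : ℂ → ℂ),
          mul_ite, ite_mul, mul_one, mul_zero, zero_mul, Finset.sum_ite_eq', Finset.sum_ite_eq]
      have he : (Vᴴ * ρABC * V : Matrix (Fin dB × Fin dC) (Fin dB × Fin dC) ℂ)
          = Matrix.of fun (x y : Fin dB × Fin dC) =>
            ∑ s, ∑ t, star (a i s) * a i t * ρABC (s, x) (t, y) := by
        ext x y
        calc (Vᴴ * ρABC * V : Matrix (Fin dB × Fin dC) (Fin dB × Fin dC) ℂ) x y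
            = ∑ w, (Vᴴ * ρABC : Matrix (Fin dB × Fin dC) (Fin dA × Fin dB × Fin dC) ℂ) x w * V w y :=
              Matrix.mul_apply
          _ = ∑ t, ∑ w2 : Fin dB × Fin dC,
                (∑ s, star (a i s) * ρABC (s, x) (t, w2)) * (a i t * if w2 = y then 1 else 0) := by
              rw [Fintype.sum_prod_type]
              exact Finset.sum_congr rfl fun t _ => Finset.sum_congr rfl fun w2 _ => by
                rw [hstep1]
          _ = ∑ t, (∑ s, star (a i s) * ρABC (s, x) (t, y)) * a i t := by
              refine Finset.sum_congr rfl fun t _ => ?_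
              simp [mul_ite, ite_mul, mul_one, mul_zero, zero_mul,
                Finset.sum_ite_eq', Finset.sum_ite_eq]
          _ = ∑ s, ∑ t, star (a i s) * a i t * ρABC (s, x) (t, y) := by
              simp only [Finset.sum_mul]
              rw [Finset.sum_comm]
              exact Finset.sum_congr rfl fun s _ =>
                Finset.sum_congr rfl fun t _ => by ring
      rwa [he] at h
    choose B hB using fun i => psd_factor (hMps i)
    have hBe : ∀ (i : Fin dA) (x2 y2 : Fin dB × Fin dC),
        (∑ s, ∑ t, star (a i s) * a i t * ρABC (s, x2) (t, y2))
          = ∑ k, star (B i k x2) * B i k y2 := by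
      intro i x2 y2
      have h := congrFun (congrFun (hB i) x2) y2
      simpa [Matrix.mul_apply, Matrix.conjTranspose_apply] using h
    let e : Fin (dA * (dB * dC)) ≃ Fin dA × (Fin dB × Fin dC) :=
      finProdFinEquiv.symm.trans (Equiv.prodCongr (Equiv.refl _) finProdFinEquiv.symm)
    refine ⟨dA * (dB * dC), fun _ => 1, fun m => a (e m).1,
      fun m z => star (B (e m).1 (e m).2 z), fun _ => zero_le_one, ?_⟩
    ext x y
    rw [Matrix.sum_apply]
    calc σABC x y
        = ∑ i, ∑ k, (a i x.1 * star (B i k x.2)) * star (a i y.1 * star (B i k y.2)) := by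
          rw [hσ' x y]
          refine Finset.sum_congr rfl fun i _ => ?_
          rw [hBe i x.2 y.2, Finset.mul_sum]
          exact Finset.sum_congr rfl fun k _ => by
            simp only [star_mul', star_star]
            ring
      _ = ∑ ik : Fin dA × (Fin dB × Fin dC),
            (a ik.1 x.1 * star (B ik.1 ik.2 x.2)) * star (a ik.1 y.1 * star (B ik.1 ik.2 y.2)) := by
          rw [Fintype.sum_prod_type]
      _ = ∑ m : Fin (dA * (dB * dC)), ((1:ℝ) • projV
            (fun z : Fin dA × Fin dB × Fin dC => a (e m).1 z.1 * star (B (e m).1 (e m).2 z.2))) x y := by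
          rw [← Equiv.sum_comp e (fun ik : Fin dA × (Fin dB × Fin dC) =>
            (a ik.1 x.1 * star (B ik.1 ik.2 x.2)) * star (a ik.1 y.1 * star (B ik.1 ik.2 y.2)))]
          exact Finset.sum_congr rfl fun m _ => by
            simp [projV, Matrix.smul_apply]
  exact ⟨hdens, hsep, htrC, htrB, htrA⟩
end QMarginal
end

section
/- The state σ_ABC = (2/3)|ξ⟩⟨ξ| + (1/3)|111⟩⟨111| on (C^2)^{⊗3}, with |ξ⟩ = (1/2)|010⟩ + (1/2)|100⟩ + (1/√2)|001⟩, has bipartite reductions σ_AB = (1/3)|Φ^+⟩⟨Φ^+| + (1/3)|00⟩⟨00| + (1/3)|11⟩⟨11| with |Φ^+⟩ = (|01⟩+|10⟩)/√2, and σ_BC = σ_AC = (1/2)|ζ⟩⟨ζ| + (1/6)|00⟩⟨00| + (1/3)|11⟩⟨11| with |ζ⟩ = √(2/3)|01⟩ + √(1/3)|10⟩. Moreover, each of σ_AB, σ_BC, σ_AC has positive semidefinite partial transpose. -/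
open Matrix BigOperators
open scoped Kronecker ComplexOrder

namespace QMarginal

/-- partial transpose on the first factor of a bipartite matrix -/
def ptFst {m n : ℕ} (ρ : Bip m n) : Bip m n :=
  fun x y => ρ (y.1, x.2) (x.1, y.2)

noncomputable def ξ : Fin 2 × Fin 2 × Fin 2 → ℂ := fun x =>
  if x = (0, 1, 0) then 1/2 else if x = (1, 0, 0) then 1/2
  else if x = (0, 0, 1) then (((Real.sqrt 2)⁻¹ : ℝ) : ℂ) else 0

noncomputable def σABC : Tri 2 2 2 :=
  (2/3 : ℝ) • projV ξ
    + (1/3 : ℝ) • projV (fun x : Fin 2 × Fin 2 × Fin 2 => if x = (1, 1, 1) then 1 else 0)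

noncomputable def Φplus : Fin 2 × Fin 2 → ℂ := fun x =>
  if x = (0, 1) ∨ x = (1, 0) then (((Real.sqrt 2)⁻¹ : ℝ) : ℂ) else 0

noncomputable def ζ : Fin 2 × Fin 2 → ℂ := fun x =>
  if x = (0, 1) then ((Real.sqrt (2/3) : ℝ) : ℂ)
  else if x = (1, 0) then ((Real.sqrt (1/3) : ℝ) : ℂ) else 0

def e00 : Fin 2 × Fin 2 → ℂ := fun x => if x = (0, 0) then 1 else 0
def e11 : Fin 2 × Fin 2 → ℂ := fun x => if x = (1, 1) then 1 else 0


lemma projV_psd {ι : Type*} [Fintype ι] [DecidableEq ι] (v : ι → ℂ) : (projV v).PosSemidef := by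
  refine posSemidef_iff_dotProduct_mulVec.mpr ⟨?_, ?_⟩
  · ext i j
    simp [projV, conjTranspose, Matrix.transpose, mul_comm]
  · intro x
    have h : star x ⬝ᵥ (projV v) *ᵥ x
        = star (∑ j, star (v j) * x j) * (∑ j, star (v j) * x j) := by
      simp only [dotProduct, mulVec, projV, Finset.mul_sum, Finset.sum_mul, star_sum,
        Pi.star_apply]
      rw [Finset.sum_comm]
      apply Finset.sum_congr rfl; intro i _
      apply Finset.sum_congr rfl; intro j _
      rw [StarMul.star_mul, star_star]
      ring
    rw [h]
    exact star_mul_self_nonneg _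

lemma psd_smul {ι : Type*} [Fintype ι] [DecidableEq ι] {M : Matrix ι ι ℂ}
    (hM : M.PosSemidef) {c : ℝ} (hc : 0 ≤ c) : (c • M).PosSemidef := by
  refine posSemidef_iff_dotProduct_mulVec.mpr ⟨?_, ?_⟩
  · ext i j
    simp only [conjTranspose_apply, Matrix.smul_apply, star_smul, star_trivial]
    rw [← conjTranspose_apply, hM.1]
  · intro x
    have h : star x ⬝ᵥ (c • M) *ᵥ x = (c : ℂ) * (star x ⬝ᵥ M *ᵥ x) := by
      simp only [dotProduct, mulVec, Finset.mul_sum, Complex.real_smul, Matrix.smul_apply,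
        smul_eq_mul]
      apply Finset.sum_congr rfl; intro i _
      apply Finset.sum_congr rfl; intro j _
      ring
    rw [h]
    exact mul_nonneg (by exact_mod_cast hc) (hM.dotProduct_mulVec_nonneg x)

noncomputable def wAC : Fin 2 × Fin 2 → ℂ := fun x =>
  if x = (0, 0) then (((Real.sqrt 6)⁻¹ : ℝ) : ℂ)
  else if x = (1, 1) then (((Real.sqrt 3)⁻¹ : ℝ) : ℂ) else 0

def e01 : Fin 2 × Fin 2 → ℂ := fun x => if x = (0, 1) then 1 else 0
def e10 : Fin 2 × Fin 2 → ℂ := fun x => if x = (1, 0) then 1 else 0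

lemma sqrt_facts :
    (Real.sqrt 2)⁻¹ * (Real.sqrt 2)⁻¹ = 1/2 ∧
    Real.sqrt (2/3) * Real.sqrt (2/3) = 2/3 ∧
    Real.sqrt (1/3) * Real.sqrt (1/3) = 1/3 ∧
    Real.sqrt (2/3) * Real.sqrt (1/3) = Real.sqrt 2 / 3 ∧
    (Real.sqrt 2)⁻¹ = Real.sqrt 2 / 2 ∧
    (Real.sqrt 6)⁻¹ * (Real.sqrt 6)⁻¹ = 1/6 ∧
    (Real.sqrt 3)⁻¹ * (Real.sqrt 3)⁻¹ = 1/3 ∧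
    (Real.sqrt 6)⁻¹ * (Real.sqrt 3)⁻¹ = Real.sqrt 2 / 6 := by
  have h2 : Real.sqrt 2 * Real.sqrt 2 = 2 := Real.mul_self_sqrt (by norm_num)
  have h3 : Real.sqrt 3 * Real.sqrt 3 = 3 := Real.mul_self_sqrt (by norm_num)
  have h2p : (0:ℝ) < Real.sqrt 2 := Real.sqrt_pos.mpr (by norm_num)
  have h3p : (0:ℝ) < Real.sqrt 3 := Real.sqrt_pos.mpr (by norm_num)
  have h63 : Real.sqrt 6 = Real.sqrt 2 * Real.sqrt 3 := by
    rw [← Real.sqrt_mul (by norm_num)]; norm_num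
  refine ⟨?_, Real.mul_self_sqrt (by norm_num), Real.mul_self_sqrt (by norm_num), ?_, ?_, ?_, ?_, ?_⟩
  · rw [← mul_inv, h2]; norm_num
  · rw [← Real.sqrt_mul (by norm_num)]
    rw [show (2:ℝ)/3 * (1/3) = 2 * (1/3)^2 by norm_num,
      Real.sqrt_mul (by norm_num), Real.sqrt_sq (by norm_num)]
    ring
  · rw [eq_div_iff (by norm_num), inv_mul_eq_div, div_eq_iff h2p.ne', h2]
  · rw [← mul_inv, h63]; field_simp; nlinarith [h2, h3]
  · rw [← mul_inv, h3]; norm_num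
  · rw [← mul_inv, h63]
    rw [eq_div_iff (by norm_num : (6:ℝ) ≠ 0), inv_mul_eq_div,
      div_eq_iff (by positivity : (0:ℝ) < Real.sqrt 2 * Real.sqrt 3 * Real.sqrt 3).ne']
    nlinarith [h2, h3]

set_option maxHeartbeats 3200000 in
/-- the bipartite reductions of σ_ABC and their PPT property. -/
theorem stmt_17 :
    trC σABC = (1/3 : ℝ) • projV Φplus + (1/3 : ℝ) • projV e00 + (1/3 : ℝ) • projV e11 ∧
    trA σABC = (1/2 : ℝ) • projV ζ + (1/6 : ℝ) • projV e00 + (1/3 : ℝ) • projV e11 ∧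
    trB σABC = trA σABC ∧
    (ptFst (trC σABC)).PosSemidef ∧ (ptFst (trA σABC)).PosSemidef ∧
    (ptFst (trB σABC)).PosSemidef := by
  obtain ⟨f2, f23, f13, fc, fi2, f6, f3, f63⟩ := sqrt_facts
  have f2s : Real.sqrt 2 ^ 2 = 2 := Real.sq_sqrt (by norm_num)
  have f23s : Real.sqrt (2/3) ^ 2 = 2/3 := Real.sq_sqrt (by norm_num)
  have f13s : Real.sqrt (1/3) ^ 2 = 1/3 := Real.sq_sqrt (by norm_num)
  have f6s : (Real.sqrt 6) ^ 2 = 6 := Real.sq_sqrt (by norm_num)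
  have f3s : (Real.sqrt 3) ^ 2 = 3 := Real.sq_sqrt (by norm_num)
  have fc' : Real.sqrt (1/3) * Real.sqrt (2/3) = Real.sqrt 2 / 3 := by rw [mul_comm]; exact fc
  have fm : Real.sqrt 6 * Real.sqrt 3 = 3 * Real.sqrt 2 := by
    rw [show (6:ℝ) = 2 * 3 by norm_num, Real.sqrt_mul (by norm_num), mul_assoc,
      Real.mul_self_sqrt (by norm_num : (0:ℝ) ≤ 3)]
    ring
  have fm' : Real.sqrt 3 * Real.sqrt 6 = 3 * Real.sqrt 2 := by rw [mul_comm]; exact fm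
  have f63' : (Real.sqrt 3)⁻¹ * (Real.sqrt 6)⁻¹ = Real.sqrt 2 / 6 := by rw [mul_comm]; exact f63
  have hAB : trC σABC = (1/3 : ℝ) • projV Φplus + (1/3 : ℝ) • projV e00 + (1/3 : ℝ) • projV e11 := by
    ext ⟨i, j⟩ ⟨k, l⟩
    fin_cases i <;> fin_cases j <;> fin_cases k <;> fin_cases l <;>
      simp [trC, σABC, projV, ξ, Φplus, e00, e11, Fin.sum_univ_two, Prod.ext_iff,
        Complex.real_smul, Complex.ext_iff] <;>
      ring_nf <;> norm_num [f2, f2s, f23, f23s, f13, f13s, fc, fc', fi2]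
  have hAC : trA σABC = (1/2 : ℝ) • projV ζ + (1/6 : ℝ) • projV e00 + (1/3 : ℝ) • projV e11 := by
    ext ⟨i, j⟩ ⟨k, l⟩
    fin_cases i <;> fin_cases j <;> fin_cases k <;> fin_cases l <;>
      simp [trA, σABC, projV, ξ, ζ, e00, e11, Fin.sum_univ_two, Prod.ext_iff,
        Complex.real_smul, Complex.ext_iff] <;>
      ring_nf <;> norm_num [f2, f2s, f23, f23s, f13, f13s, fc, fc', fi2]
  have hBA : trB σABC = trA σABC := by
    ext ⟨i, j⟩ ⟨k, l⟩
    fin_cases i <;> fin_cases j <;> fin_cases k <;> fin_cases l <;>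
      simp [trA, trB, σABC, projV, ξ, Fin.sum_univ_two, Prod.ext_iff]
  have hptAB : ptFst (trC σABC) = (1/6 : ℝ) • projV (fun x => e00 x + e11 x)
      + (1/6 : ℝ) • projV e00 + (1/6 : ℝ) • projV e01
      + (1/6 : ℝ) • projV e10 + (1/6 : ℝ) • projV e11 := by
    rw [hAB]
    ext ⟨i, j⟩ ⟨k, l⟩
    fin_cases i <;> fin_cases j <;> fin_cases k <;> fin_cases l <;>
      simp [ptFst, projV, Φplus, e00, e01, e10, e11, Prod.ext_iff,
        Complex.real_smul, Complex.ext_iff] <;>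
      ring_nf <;> norm_num [f2, f2s, fi2]
  have hptAC : ptFst (trA σABC) = projV wAC + (1/3 : ℝ) • projV e01 + (1/6 : ℝ) • projV e10 := by
    rw [hAC]
    ext ⟨i, j⟩ ⟨k, l⟩
    fin_cases i <;> fin_cases j <;> fin_cases k <;> fin_cases l <;>
      simp [ptFst, projV, ζ, wAC, e00, e01, e10, e11, Prod.ext_iff,
        Complex.real_smul, Complex.ext_iff] <;>
      ring_nf <;> norm_num [f2, f2s, f23, f23s, f13, f13s, fc, fc', fi2, f6, f6s, f3, f3s, f63, f63', fm, fm'] <;> ring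
  have psdAB : (ptFst (trC σABC)).PosSemidef := by
    rw [hptAB]
    exact ((((psd_smul (projV_psd _) (by norm_num)).add (psd_smul (projV_psd _) (by norm_num))).add
      (psd_smul (projV_psd _) (by norm_num))).add (psd_smul (projV_psd _) (by norm_num))).add
      (psd_smul (projV_psd _) (by norm_num))
  have psdAC : (ptFst (trA σABC)).PosSemidef := by
    rw [hptAC]
    exact ((projV_psd _).add (psd_smul (projV_psd _) (by norm_num))).add
      (psd_smul (projV_psd _) (by norm_num))
  exact ⟨hAB, hAC, hBA, psdAB, hBA ▸ psdAC, by rw [hBA]; exact psdAC⟩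
end QMarginal
end

section
/- Suppose the bipartite states ρ_AB, ρ_BC, ρ_AC are compatible with exactly one tripartite state ρ_ABC (unique compatibility), and let σ_ABC be a tripartite state with Range(σ_ABC) ⊆ Range(ρ_ABC). Then σ_ABC is the unique tripartite state whose bipartite reductions are σ_AB, σ_BC, σ_AC. -/
open Matrix BigOperators
open scoped Kronecker ComplexOrder

namespace QMarginal

lemma star_dot_self {n : Type*} [Fintype n] (v : n → ℂ) :
    star v ⬝ᵥ v = ((∑ k, Complex.normSq (v k) : ℝ) : ℂ) := by
  push_cast
  simp only [dotProduct, Pi.star_apply]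
  exact Finset.sum_congr rfl fun k _ => (Complex.normSq_eq_conj_mul_self).symm ▸ rfl

lemma quad_le_trace {n : Type*} [Fintype n] [DecidableEq n] {S : Matrix n n ℂ}
    (hS : S.PosSemidef) (y : n → ℂ) :
    star y ⬝ᵥ S *ᵥ y ≤ S.trace * (star y ⬝ᵥ y) := by
  obtain ⟨B, rfl⟩ : ∃ B : Matrix n n ℂ, S = Bᴴ * B := by
    open scoped MatrixOrder in
    obtain ⟨X, hX, -, hXX⟩ := CFC.exists_sqrt_of_isSelfAdjoint_of_quasispectrumRestricts
      hS.isHermitian (QuasispectrumRestricts.nnreal_of_nonneg hS.nonneg)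
    exact ⟨X, by rw [← hXX, ← Matrix.star_eq_conjTranspose, hX.star_eq]⟩
  have h1 : star y ⬝ᵥ (Bᴴ * B) *ᵥ y = star (B *ᵥ y) ⬝ᵥ (B *ᵥ y) := by
    rw [← Matrix.mulVec_mulVec, Matrix.dotProduct_mulVec, Matrix.star_mulVec]
  have h2 : (Bᴴ * B).trace = ((∑ i, ∑ j, Complex.normSq (B i j) : ℝ) : ℂ) := by
    push_cast
    simp only [Matrix.trace, Matrix.diag, Matrix.mul_apply, Matrix.conjTranspose_apply]
    rw [Finset.sum_comm]
    exact Finset.sum_congr rfl fun i _ => Finset.sum_congr rfl fun j _ =>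
      (Complex.normSq_eq_conj_mul_self).symm ▸ rfl
  rw [h1, h2, star_dot_self, star_dot_self, ← Complex.ofReal_mul, Complex.real_le_real]
  have key : ∀ i, Complex.normSq ((B *ᵥ y) i) ≤
      (∑ j, Complex.normSq (B i j)) * (∑ j, Complex.normSq (y j)) := by
    intro i
    have habs : ‖(B *ᵥ y) i‖ ≤ ∑ j, ‖B i j‖ * ‖y j‖ := by
      calc ‖(B *ᵥ y) i‖ = ‖∑ j, B i j * y j‖ := by simp [Matrix.mulVec, dotProduct]
      _ ≤ ∑ j, ‖B i j * y j‖ := norm_sum_le _ _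
      _ = ∑ j, ‖B i j‖ * ‖y j‖ := by simp [norm_mul]
    have hcs := Finset.sum_mul_sq_le_sq_mul_sq Finset.univ (fun j => ‖B i j‖) (fun j => ‖y j‖)
    calc Complex.normSq ((B *ᵥ y) i) = ‖(B *ᵥ y) i‖ ^ 2 := by
          rw [← Complex.sq_norm]
      _ ≤ (∑ j, ‖B i j‖ * ‖y j‖) ^ 2 := by
          apply pow_le_pow_left₀ (norm_nonneg _) habs
      _ ≤ (∑ j, ‖B i j‖ ^ 2) * (∑ j, ‖y j‖ ^ 2) := hcs
      _ = (∑ j, Complex.normSq (B i j)) * (∑ j, Complex.normSq (y j)) := by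
          simp_rw [← Complex.sq_norm]
  calc ∑ i, Complex.normSq ((B *ᵥ y) i)
      ≤ ∑ i, (∑ j, Complex.normSq (B i j)) * (∑ j, Complex.normSq (y j)) :=
        Finset.sum_le_sum fun i _ => key i
    _ = (∑ i, ∑ j, Complex.normSq (B i j)) * (∑ j, Complex.normSq (y j)) := by
        rw [Finset.sum_mul]

lemma psd_real_smul {n : Type*} [Fintype n] {M : Matrix n n ℂ} (h : M.PosSemidef)
    {c : ℝ} (hc : 0 ≤ c) : ((c : ℂ) • M).PosSemidef := by
  refine Matrix.PosSemidef.of_dotProduct_mulVec_nonneg ?_ ?_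
  · show ((c : ℂ) • M)ᴴ = (c : ℂ) • M
    rw [Matrix.conjTranspose_smul, h.1.eq]
    congr 1
    simp [Complex.conj_ofReal]
  · intro x
    rw [Matrix.smul_mulVec, dotProduct_smul, smul_eq_mul]
    exact mul_nonneg (Complex.zero_le_real.mpr hc) (h.dotProduct_mulVec_nonneg x)

lemma exists_eps {n : Type*} [Fintype n] [DecidableEq n] {ρ σ : Matrix n n ℂ}
    (hρ : ρ.PosSemidef) (hσ : σ.PosSemidef) (hσtr : σ.trace = 1)
    (hker : ∀ x, ρ *ᵥ x = 0 → σ *ᵥ x = 0) :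
    ∃ ε : ℝ, 0 < ε ∧ (ρ - (ε : ℂ) • σ).PosSemidef := by
  classical
  have hH := hρ.1
  set lam : n → ℝ := hH.eigenvalues with hlamdef
  set U : Matrix n n ℂ := (hH.eigenvectorUnitary : Matrix n n ℂ) with hUdef
  have hU1 : U * star U = 1 := (Matrix.mem_unitaryGroup_iff).mp hH.eigenvectorUnitary.2
  have hU2 : star U * U = 1 := (Matrix.mem_unitaryGroup_iff').mp hH.eigenvectorUnitary.2
  set D : Matrix n n ℂ := Matrix.diagonal (fun i => (lam i : ℂ)) with hDdef
  set S : Matrix n n ℂ := star U * σ * U with hSdef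
  have hρdec : ρ = U * D * star U := by
    have := hH.spectral_theorem
    rw [Unitary.conjStarAlgAut_apply] at this
    exact this
  have hσdec : σ = U * S * star U := by
    rw [hSdef]
    calc σ = (U * star U) * σ * (U * star U) := by rw [hU1]; simp
    _ = U * (star U * σ * U) * star U := by noncomm_ring
  have hS : S.PosSemidef := by
    have := hσ.conjTranspose_mul_mul_same U
    simpa [hSdef, Matrix.star_eq_conjTranspose] using this
  have hStr : S.trace = 1 := by
    rw [hSdef, Matrix.trace_mul_cycle, hU1, Matrix.one_mul, hσtr]
  -- columns (and rows) of S vanish on kernel eigenvectors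
  have hScol : ∀ i, lam i = 0 → ∀ j, S j i = 0 := by
    intro i hi j
    have hb : ρ *ᵥ ⇑(hH.eigenvectorBasis i) = 0 := by
      rw [hH.mulVec_eigenvectorBasis]
      simp [← hlamdef, hi]
    have hσb : σ *ᵥ ⇑(hH.eigenvectorBasis i) = 0 := hker _ hb
    have hcol : S *ᵥ Pi.single i 1 = 0 := by
      rw [hSdef, ← Matrix.mulVec_mulVec, ← Matrix.mulVec_mulVec]
      rw [show U *ᵥ Pi.single i 1 = ⇑(hH.eigenvectorBasis i) from hH.eigenvectorUnitary_mulVec i]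
      rw [hσb]
      simp
    have := congrFun hcol j
    simpa [Matrix.mulVec_single] using this
  have hSrow : ∀ i, lam i = 0 → ∀ j, S i j = 0 := by
    intro i hi j
    have : S i j = star (S j i) := by
      conv_lhs => rw [← hS.1.eq]
      rfl
    rw [this, hScol i hi j, star_zero]
  -- the epsilon
  set t : Finset n := Finset.univ.filter (fun i => lam i ≠ 0) with htdef
  set ε : ℝ := if h : t.Nonempty then t.inf' h lam else 1 with hεdef
  have hεpos : 0 < ε := by
    rw [hεdef]
    split
    · rename_i h
      rw [Finset.lt_inf'_iff]
      intro b hb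
      rw [htdef, Finset.mem_filter] at hb
      exact lt_of_le_of_ne (hρ.eigenvalues_nonneg b) (Ne.symm hb.2)
    · exact one_pos
  have hεle : ∀ i, lam i ≠ 0 → ε ≤ lam i := by
    intro i hi
    have hit : i ∈ t := by rw [htdef]; simp [hi]
    rw [hεdef, dif_pos ⟨i, hit⟩]
    exact Finset.inf'_le _ hit
  refine ⟨ε, hεpos, ?_⟩
  have hsub : ρ - (ε : ℂ) • σ = U * (D - (ε : ℂ) • S) * star U := by
    rw [hρdec, hσdec, Matrix.mul_sub, Matrix.sub_mul]
    congr 1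
    rw [mul_smul_comm, smul_mul_assoc]
  rw [hsub]
  have hDS : (D - (ε : ℂ) • S).PosSemidef := by
    refine Matrix.PosSemidef.of_dotProduct_mulVec_nonneg ?_ ?_
    · show (D - (ε : ℂ) • S)ᴴ = D - (ε : ℂ) • S
      have hDherm : Dᴴ = D := by
        ext i j
        rw [Matrix.conjTranspose_apply, hDdef]
        by_cases h : i = j
        · subst h; simp [Matrix.diagonal_apply_eq, Complex.conj_ofReal]
        · simp [Matrix.diagonal_apply_ne _ h, Matrix.diagonal_apply_ne _ (Ne.symm h)]
      rw [Matrix.conjTranspose_sub, Matrix.conjTranspose_smul, hS.1.eq, hDherm]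
      congr 1
      simp [Complex.star_def, Complex.conj_ofReal]
    · intro x
      set x' : n → ℂ := fun k => if lam k = 0 then 0 else x k with hx'def
      have hSx : S *ᵥ x = S *ᵥ x' := by
        funext j
        simp only [Matrix.mulVec, dotProduct]
        refine Finset.sum_congr rfl fun k _ => ?_
        by_cases hk : lam k = 0
        · rw [hScol k hk j]; simp
        · simp [hx'def, hk]
      have hdot : star x ⬝ᵥ (S *ᵥ x') = star x' ⬝ᵥ (S *ᵥ x') := by
        simp only [dotProduct, Pi.star_apply]
        refine Finset.sum_congr rfl fun k _ => ?_
        by_cases hk : lam k = 0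
        · have hzero : (S *ᵥ x') k = 0 := by
            simp only [Matrix.mulVec, dotProduct]
            refine Finset.sum_eq_zero fun j _ => ?_
            rw [hSrow k hk j, zero_mul]
          rw [hzero, mul_zero, mul_zero]
        · simp [hx'def, hk]
      -- q is the sigma-part quadratic form
      set q : ℂ := star x ⬝ᵥ (S *ᵥ x) with hqdef
      have hq0 : 0 ≤ q := hS.dotProduct_mulVec_nonneg x
      have him : q.im = 0 := by
        rw [Complex.le_def] at hq0
        simpa using hq0.2.symm
      have hqreal : q = ((q.re : ℝ) : ℂ) := Complex.ext (by simp) (by simp [him])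
      have hqle : (q.re : ℝ) ≤ ∑ k, Complex.normSq (x' k) := by
        have h1 : q ≤ S.trace * (star x' ⬝ᵥ x') := by
          rw [hqdef, hSx, hdot]
          exact quad_le_trace hS x'
        rw [hStr, one_mul, star_dot_self, hqreal] at h1
        exact Complex.real_le_real.mp h1
      have hqre0 : (0:ℝ) ≤ q.re := by
        rw [Complex.le_def] at hq0
        simpa using hq0.1
      -- the diagonal part
      have hDx : star x ⬝ᵥ (D *ᵥ x) = ((∑ k, lam k * Complex.normSq (x k) : ℝ) : ℂ) := by
        push_cast
        simp only [dotProduct, Pi.star_apply, hDdef, Matrix.mulVec_diagonal]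
        refine Finset.sum_congr rfl fun k _ => ?_
        have hns : star (x k) * x k = (Complex.normSq (x k) : ℂ) := by
          rw [show star (x k) = (starRingEnd ℂ) (x k) from rfl,
            ← Complex.normSq_eq_conj_mul_self]
        linear_combination (lam k : ℂ) * hns
      have hexpand : star x ⬝ᵥ ((D - (ε : ℂ) • S) *ᵥ x)
          = star x ⬝ᵥ (D *ᵥ x) - (ε : ℂ) * q := by
        rw [Matrix.sub_mulVec, Matrix.smul_mulVec, dotProduct_sub,
          dotProduct_smul, smul_eq_mul, hqdef]
      rw [hexpand, hDx, hqreal]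
      rw [show ((∑ k, lam k * Complex.normSq (x k) : ℝ) : ℂ) - (ε : ℂ) * ((q.re : ℝ) : ℂ)
          = (((∑ k, lam k * Complex.normSq (x k)) - ε * q.re : ℝ) : ℂ) by push_cast; ring]
      rw [Complex.zero_le_real]
      rw [sub_nonneg]
      calc ε * q.re ≤ ε * ∑ k, Complex.normSq (x' k) :=
            mul_le_mul_of_nonneg_left hqle (le_of_lt hεpos)
        _ = ∑ k, ε * Complex.normSq (x' k) := Finset.mul_sum _ _ _
        _ ≤ ∑ k, lam k * Complex.normSq (x k) := by
            refine Finset.sum_le_sum fun k _ => ?_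
            by_cases hk : lam k = 0
            · simp [hx'def, hk]
            · rw [show x' k = x k by simp [hx'def, hk]]
              exact mul_le_mul_of_nonneg_right (hεle k hk) (Complex.normSq_nonneg _)
  exact hDS.mul_mul_conjTranspose_same U


lemma trC_lin {dA dB dC : ℕ} (A B C : Tri dA dB dC) (c : ℂ) :
    trC (c • A + (B - c • C)) = c • trC A + (trC B - c • trC C) := by
  funext x y
  simp only [trC, Matrix.add_apply, Matrix.sub_apply, Matrix.smul_apply, Matrix.add_apply,
    smul_eq_mul, Finset.sum_add_distrib, Finset.sum_sub_distrib, Finset.mul_sum]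

lemma trB_lin {dA dB dC : ℕ} (A B C : Tri dA dB dC) (c : ℂ) :
    trB (c • A + (B - c • C)) = c • trB A + (trB B - c • trB C) := by
  funext x y
  simp only [trB, Matrix.add_apply, Matrix.sub_apply, Matrix.smul_apply, Matrix.add_apply,
    smul_eq_mul, Finset.sum_add_distrib, Finset.sum_sub_distrib, Finset.mul_sum]

lemma trA_lin {dA dB dC : ℕ} (A B C : Tri dA dB dC) (c : ℂ) :
    trA (c • A + (B - c • C)) = c • trA A + (trA B - c • trA C) := by
  funext x y
  simp only [trA, Matrix.add_apply, Matrix.sub_apply, Matrix.smul_apply, Matrix.add_apply,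
    smul_eq_mul, Finset.sum_add_distrib, Finset.sum_sub_distrib, Finset.mul_sum]

/-- if ρ_ABC is uniquely determined by its two-body reductions and
Range(σ_ABC) ⊆ Range(ρ_ABC), then σ_ABC is also uniquely determined by its
two-body reductions. -/
theorem stmt_18 {dA dB dC : ℕ} (ρABC : Tri dA dB dC) (hρ : IsDensity ρABC)
    (huniq : ∀ τ : Tri dA dB dC, IsDensity τ →
      trC τ = trC ρABC → trB τ = trB ρABC → trA τ = trA ρABC → τ = ρABC)
    (σABC : Tri dA dB dC) (hσ : IsDensity σABC)
    (hrange : LinearMap.range σABC.mulVecLin ≤ LinearMap.range ρABC.mulVecLin) :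
    ∀ τ : Tri dA dB dC, IsDensity τ →
      trC τ = trC σABC → trB τ = trB σABC → trA τ = trA σABC → τ = σABC := by
  intro τ hτ hCt hBt hAt
  have hker : ∀ x, ρABC *ᵥ x = 0 → σABC *ᵥ x = 0 := by
    intro x hx
    have hmem : σABC.mulVecLin x ∈ LinearMap.range ρABC.mulVecLin :=
      hrange (LinearMap.mem_range_self _ x)
    obtain ⟨y, hy⟩ := hmem
    rw [Matrix.mulVecLin_apply, Matrix.mulVecLin_apply] at hy
    have h0 : star x ⬝ᵥ (σABC *ᵥ x) = 0 := by
      rw [← hy, Matrix.dotProduct_mulVec]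
      have hstar : star x ᵥ* ρABC = 0 := by
        have hsx := congrArg star hx
        rw [Matrix.star_mulVec, hρ.1.1.eq, star_zero] at hsx
        exact hsx
      rw [hstar, zero_dotProduct]
    exact (hσ.1.dotProduct_mulVec_zero_iff x).mp h0
  obtain ⟨ε, hε, hPSD⟩ := exists_eps hρ.1 hσ.1 hσ.2 hker
  have hρ'psd : ((ε : ℂ) • τ + (ρABC - (ε : ℂ) • σABC)).PosSemidef :=
    (psd_real_smul hτ.1 hε.le).add hPSD
  have hρ'tr : ((ε : ℂ) • τ + (ρABC - (ε : ℂ) • σABC)).trace = 1 := by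
    rw [Matrix.trace_add, Matrix.trace_sub, Matrix.trace_smul, Matrix.trace_smul,
      hτ.2, hρ.2, hσ.2]
    simp
  have hC' : trC ((ε : ℂ) • τ + (ρABC - (ε : ℂ) • σABC)) = trC ρABC := by
    rw [trC_lin, hCt]; abel
  have hB' : trB ((ε : ℂ) • τ + (ρABC - (ε : ℂ) • σABC)) = trB ρABC := by
    rw [trB_lin, hBt]; abel
  have hA' : trA ((ε : ℂ) • τ + (ρABC - (ε : ℂ) • σABC)) = trA ρABC := by
    rw [trA_lin, hAt]; abel
  have heq := huniq _ ⟨hρ'psd, hρ'tr⟩ hC' hB' hA'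
  have h3 := eq_sub_of_add_eq heq
  rw [sub_sub_cancel] at h3
  exact smul_right_injective _ (Complex.ofReal_ne_zero.mpr hε.ne') h3
end QMarginal
end
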